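/- Let 0 ≤ a < b and γ ∈ ℝ. Then there exists a constant K_γ ∈ (0,∞) (depending on a, b, γ but not on N) such that for every N ∈ ℕ with N ≥ 1, setting h = (b−a)/N and x_{n+1/2} = a + (n+1/2)h, the sum S_N = h · ∑_{n=0}^{N−1} x_{n+1/2}^{γ} satisfies: |S_N| < K_γ · h^{γ+1} if a = 0 and γ < −1; |S_N| < K_γ − ln(h/2) if a = 0 and γ = −1; and |S_N| < K_γ otherwise (i.e., if a > 0, or if a = 0 and γ > −1). -/

import Mathlib

open Filter Set


private lemma half_bound {γ : ℝ} (hγ : γ ≤ 0) (n : ℕ) :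
    ((n : ℝ) + 1/2) ^ γ ≤ 2 ^ (-γ) * ((n : ℝ) + 1) ^ γ := by
  have h1 : (0:ℝ) < ((n:ℝ) + 1) / 2 := by positivity
  have h2 : ((n:ℝ) + 1) / 2 ≤ (n:ℝ) + 1/2 := by
    have : (0:ℝ) ≤ (n:ℝ) := Nat.cast_nonneg n
    linarith
  calc ((n : ℝ) + 1/2) ^ γ ≤ (((n:ℝ) + 1) / 2) ^ γ :=
        Real.rpow_le_rpow_of_nonpos h1 h2 hγ
    _ = 2 ^ (-γ) * ((n : ℝ) + 1) ^ γ := by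
        rw [Real.div_rpow (by positivity) (by norm_num), Real.rpow_neg (by norm_num)]
        ring

private lemma bern_step {p : ℝ} (hp0 : 0 < p) (hp1 : p ≤ 1) (n : ℕ) :
    p * (((n : ℝ) + 1) ^ p / ((n : ℝ) + 1)) ≤ ((n : ℝ) + 1) ^ p - (n : ℝ) ^ p := by
  have hn1 : (0:ℝ) < (n:ℝ) + 1 := by positivity
  have hs : (-1:ℝ) ≤ -(1/((n:ℝ)+1)) := by
    have h : 1/((n:ℝ)+1) ≤ 1 := by
      rw [div_le_one hn1]
      have : (0:ℝ) ≤ (n:ℝ) := Nat.cast_nonneg n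
      linarith
    linarith
  have hB := rpow_one_add_le_one_add_mul_self hs hp0.le hp1
  have h1 : (1 : ℝ) + -(1/((n:ℝ)+1)) = (n:ℝ)/((n:ℝ)+1) := by field_simp; ring
  rw [h1, Real.div_rpow (Nat.cast_nonneg n) hn1.le] at hB
  have hpos : (0:ℝ) < ((n:ℝ)+1)^p := Real.rpow_pos_of_pos hn1 p
  have hB2 : (n:ℝ)^p ≤ (1 + p * -(1/((n:ℝ)+1))) * ((n:ℝ)+1)^p := (div_le_iff₀ hpos).mp hB
  have key : ((n:ℝ)+1)^p - p * (((n:ℝ)+1)^p / ((n:ℝ)+1)) = (1 + p * -(1/((n:ℝ)+1))) * ((n:ℝ)+1)^p := by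
    field_simp
    ring
  linarith

private lemma sum_rpow_le {γ : ℝ} (h1 : -1 < γ) (h2 : γ < 0) (N : ℕ) :
    ∑ n ∈ Finset.range N, ((n:ℝ) + 1) ^ γ ≤ (N:ℝ) ^ (γ + 1) / (γ + 1) := by
  have hp0 : 0 < γ + 1 := by linarith
  have hp1 : γ + 1 ≤ 1 := by linarith
  have tel := Finset.sum_range_sub (fun n : ℕ => ((n:ℕ):ℝ) ^ (γ+1)) N
  push_cast at tel
  have step : ∀ n ∈ Finset.range N, (γ+1) * ((n:ℝ)+1) ^ γ
      ≤ ((n:ℝ)+1) ^ (γ+1) - (n:ℝ) ^ (γ+1) := by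
    intro n _
    have hb := bern_step hp0 hp1 n
    have hn1 : (0:ℝ) < (n:ℝ) + 1 := by positivity
    have e : ((n:ℝ)+1) ^ (γ+1) / ((n:ℝ)+1) = ((n:ℝ)+1) ^ γ := by
      rw [← Real.rpow_sub_one hn1.ne' (γ+1)]
      norm_num
    rw [e] at hb
    exact hb
  have hsum : (γ+1) * ∑ n ∈ Finset.range N, ((n:ℝ)+1) ^ γ ≤ (N:ℝ) ^ (γ+1) := by
    rw [Finset.mul_sum]
    calc ∑ n ∈ Finset.range N, (γ+1) * ((n:ℝ)+1)^γ
        ≤ ∑ n ∈ Finset.range N, (((n:ℝ)+1)^(γ+1) - (n:ℝ)^(γ+1)) := Finset.sum_le_sum step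
      _ = (N:ℝ)^(γ+1) := by rw [tel, Real.zero_rpow hp0.ne', sub_zero]
  rw [le_div_iff₀ hp0]
  linarith

private lemma sum_inv_le (N : ℕ) (hN : 1 ≤ N) :
    ∑ n ∈ Finset.range N, ((n:ℝ) + 1/2)⁻¹ ≤ 2 + Real.log 2 + Real.log N := by
  obtain ⟨M, rfl⟩ : ∃ M, N = M + 1 := ⟨N - 1, (Nat.succ_pred_eq_of_pos hN).symm⟩
  rw [Finset.sum_range_succ']
  have tel := Finset.sum_range_sub (fun i : ℕ => Real.log (((i:ℕ):ℝ) + 1/2)) M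
  push_cast at tel ⊢
  have step : ∀ i ∈ Finset.range M, ((i:ℝ) + 1 + 1/2)⁻¹
      ≤ Real.log ((i:ℝ) + 1 + 1/2) - Real.log ((i:ℝ) + 1/2) := by
    intro i _
    have hu : (0:ℝ) < (i:ℝ) + 1/2 := by positivity
    have hv : (0:ℝ) < (i:ℝ) + 1 + 1/2 := by positivity
    have hlog := Real.log_le_sub_one_of_pos (x := ((i:ℝ)+1/2)/((i:ℝ)+1+1/2)) (by positivity)
    rw [Real.log_div hu.ne' hv.ne'] at hlog
    have e : ((i:ℝ)+1/2)/((i:ℝ)+1+1/2) - 1 = -(((i:ℝ)+1+1/2)⁻¹) := by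
      field_simp
      ring
    linarith
  have hsum : ∑ i ∈ Finset.range M, ((i:ℝ) + 1 + 1/2)⁻¹
      ≤ Real.log ((M:ℝ) + 1/2) - Real.log ((0:ℝ) + 1/2) := by
    calc ∑ i ∈ Finset.range M, ((i:ℝ) + 1 + 1/2)⁻¹
        ≤ ∑ i ∈ Finset.range M, (Real.log ((i:ℝ) + 1 + 1/2) - Real.log ((i:ℝ) + 1/2)) :=
          Finset.sum_le_sum step
      _ = Real.log ((M:ℝ) + 1/2) - Real.log ((0:ℝ) + 1/2) := tel
  have hlog2 : Real.log ((0:ℝ) + 1/2) = -Real.log 2 := by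
    rw [zero_add, one_div, Real.log_inv]
  have hmono : Real.log ((M:ℝ) + 1/2) ≤ Real.log ((M:ℝ) + 1) := by
    apply Real.log_le_log (by positivity)
    linarith
  have h0 : (((0:ℕ):ℝ) + 1/2)⁻¹ = 2 := by norm_num
  linarith [hsum, hmono]

private lemma sum_le_tsum' {γ : ℝ} (hγ : γ < -1) (N : ℕ) :
    ∑ n ∈ Finset.range N, ((n:ℝ)+1) ^ γ ≤ ∑' n : ℕ, ((n:ℝ)+1) ^ γ := by
  have hs : Summable (fun n : ℕ => ((n:ℝ)+1) ^ γ) := by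
    have h := Real.summable_nat_rpow.mpr hγ
    have h2 := (summable_nat_add_iff 1).mpr h
    apply h2.congr
    intro n
    push_cast
    ring_nf
  exact Summable.sum_le_tsum _ (fun i _ => Real.rpow_nonneg (by positivity) γ) hs

private lemma factor_sum (γ h : ℝ) (hh : 0 < h) (N : ℕ) :
    h * ∑ n ∈ Finset.range N, (((n:ℝ) + 1/2) * h) ^ γ
      = h ^ (γ + 1) * ∑ n ∈ Finset.range N, ((n:ℝ) + 1/2) ^ γ := by
  rw [Real.rpow_add_one hh.ne', Finset.mul_sum, Finset.mul_sum]
  refine Finset.sum_congr rfl fun n _ => ?_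
  rw [Real.mul_rpow (by positivity) hh.le]
  ring
theorem stmt13 (a b γ : ℝ) (ha : 0 ≤ a) (hab : a < b) :
    ∃ K : ℝ, 0 < K ∧ ∀ N : ℕ, 1 ≤ N →
      ((a = 0 ∧ γ < -1 →
          |((b - a) / N) * ∑ n ∈ Finset.range N,
              (a + ((n : ℝ) + 1 / 2) * ((b - a) / N)) ^ γ| <
            K * ((b - a) / N) ^ (γ + 1)) ∧
        (a = 0 ∧ γ = -1 →
          |((b - a) / N) * ∑ n ∈ Finset.range N,
              (a + ((n : ℝ) + 1 / 2) * ((b - a) / N)) ^ γ| <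
            K - Real.log ((b - a) / N / 2)) ∧
        (0 < a ∨ (a = 0 ∧ -1 < γ) →
          |((b - a) / N) * ∑ n ∈ Finset.range N,
              (a + ((n : ℝ) + 1 / 2) * ((b - a) / N)) ^ γ| < K)) := by
  have hba : 0 < b - a := sub_pos.mpr hab
  refine ⟨1 + |2 ^ (-γ) * ∑' n : ℕ, ((n:ℝ)+1) ^ γ| + |2 + Real.log (b-a)|
      + |(b-a) * max (a ^ γ) (b ^ γ)| + |(b-a) ^ (γ+1)|
      + |2 ^ (-γ) * ((b-a) ^ (γ+1) / (γ+1))|, by positivity, ?_⟩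
  intro N hN
  have hN0 : (0:ℝ) < N := by exact_mod_cast hN
  have hh : 0 < (b - a)/N := div_pos hba hN0
  have hhN : (N:ℝ) * ((b - a)/N) = b - a := by field_simp
  -- nonnegativity of the sums
  have hterm : ∀ n : ℕ, 0 ≤ (a + ((n : ℝ) + 1 / 2) * ((b - a) / N)) ^ γ := by
    intro n
    apply Real.rpow_nonneg
    have : 0 ≤ ((n : ℝ) + 1 / 2) * ((b - a) / N) := by positivity
    linarith
  have hSnn : 0 ≤ ((b - a) / N) * ∑ n ∈ Finset.range N,
      (a + ((n : ℝ) + 1 / 2) * ((b - a) / N)) ^ γ :=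
    mul_nonneg hh.le (Finset.sum_nonneg fun n _ => hterm n)
  rw [abs_of_nonneg hSnn]
  -- upper bound on midpoints
  have hmid : ∀ n ∈ Finset.range N, a + ((n : ℝ) + 1 / 2) * ((b - a) / N) ≤ b := by
    intro n hn
    have h1 : (n:ℝ) + 1 ≤ N := by exact_mod_cast Nat.succ_le_of_lt (Finset.mem_range.mp hn)
    have h2 : ((n:ℝ) + 1/2) * ((b-a)/N) ≤ (N:ℝ) * ((b-a)/N) :=
      mul_le_mul_of_nonneg_right (by linarith) hh.le
    linarith [hhN ▸ h2]
  refine ⟨?_, ?_, ?_⟩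
  · -- a = 0, γ < -1
    rintro ⟨rfl, hγ⟩
    simp only [zero_add, sub_zero] at *
    rw [factor_sum γ (b/N) hh N]
    have hSig : ∑ n ∈ Finset.range N, ((n:ℝ)+1/2)^γ
        ≤ 2^(-γ) * ∑' n : ℕ, ((n:ℝ)+1) ^ γ := by
      calc ∑ n ∈ Finset.range N, ((n:ℝ)+1/2)^γ
          ≤ ∑ n ∈ Finset.range N, 2^(-γ) * ((n:ℝ)+1)^γ :=
            Finset.sum_le_sum fun n _ => half_bound (by linarith) n
        _ = 2^(-γ) * ∑ n ∈ Finset.range N, ((n:ℝ)+1)^γ := by rw [Finset.mul_sum]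
        _ ≤ 2^(-γ) * ∑' n : ℕ, ((n:ℝ)+1) ^ γ :=
            mul_le_mul_of_nonneg_left (sum_le_tsum' hγ N) (by positivity)
    have hp : 0 < (b/N) ^ (γ+1) := Real.rpow_pos_of_pos hh (γ+1)
    have habs : 2^(-γ) * ∑' n : ℕ, ((n:ℝ)+1) ^ γ ≤ |2^(-γ) * ∑' n : ℕ, ((n:ℝ)+1) ^ γ| :=
      le_abs_self _
    have hK : ∑ n ∈ Finset.range N, ((n:ℝ)+1/2)^γ
        < 1 + |2 ^ (-γ) * ∑' n : ℕ, ((n:ℝ)+1) ^ γ| + |2 + Real.log b|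
        + |b * max ((0:ℝ) ^ γ) (b ^ γ)| + |b ^ (γ+1)| + |2 ^ (-γ) * (b ^ (γ+1) / (γ+1))| := by
      have : (0:ℝ) ≤ |2 + Real.log b| := abs_nonneg _
      have : (0:ℝ) ≤ |b * max ((0:ℝ) ^ γ) (b ^ γ)| := abs_nonneg _
      have : (0:ℝ) ≤ |b ^ (γ+1)| := abs_nonneg _
      have : (0:ℝ) ≤ |2 ^ (-γ) * (b ^ (γ+1) / (γ+1))| := abs_nonneg _
      linarith
    calc (b/N) ^ (γ+1) * ∑ n ∈ Finset.range N, ((n:ℝ)+1/2)^γ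
        < (b/N) ^ (γ+1) * (1 + |2 ^ (-γ) * ∑' n : ℕ, ((n:ℝ)+1) ^ γ| + |2 + Real.log b|
          + |b * max ((0:ℝ) ^ γ) (b ^ γ)| + |b ^ (γ+1)| + |2 ^ (-γ) * (b ^ (γ+1) / (γ+1))|) :=
          by exact mul_lt_mul_of_pos_left hK hp
      _ = _ := by ring
  · -- a = 0, γ = -1
    rintro ⟨rfl, rfl⟩
    simp only [zero_add, sub_zero] at *
    have hb : (0:ℝ) < b := by linarith
    have e2 : (b/N) * ∑ n ∈ Finset.range N, (((n:ℝ)+1/2) * (b/N)) ^ (-1:ℝ)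
        = ∑ n ∈ Finset.range N, ((n:ℝ)+1/2)⁻¹ := by
      rw [Finset.mul_sum]
      refine Finset.sum_congr rfl fun n _ => ?_
      rw [Real.rpow_neg_one, mul_inv]
      have hx : ((n:ℝ)+1/2) ≠ 0 := by positivity
      field_simp
    rw [e2]
    have hbd := sum_inv_le N hN
    have hlog : Real.log (b/N/2) = Real.log b - Real.log N - Real.log 2 := by
      rw [Real.log_div (by positivity) two_ne_zero, Real.log_div hb.ne' hN0.ne']
    rw [hlog]
    have h2 : 2 + Real.log b ≤ |2 + Real.log b| := le_abs_self _
    have h3 : (0:ℝ) ≤ |2 ^ (-(-1:ℝ)) * ∑' n : ℕ, ((n:ℝ)+1) ^ (-1:ℝ)| := abs_nonneg _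
    have h4 : (0:ℝ) ≤ |b * max ((0:ℝ) ^ (-1:ℝ)) (b ^ (-1:ℝ))| := abs_nonneg _
    have h5 : (0:ℝ) ≤ |b ^ ((-1:ℝ)+1)| := abs_nonneg _
    have h6 : (0:ℝ) ≤ |2 ^ (-(-1:ℝ)) * (b ^ ((-1:ℝ)+1) / ((-1:ℝ)+1))| := abs_nonneg _
    generalize hA1 : |2 ^ (-(-1:ℝ)) * ∑' n : ℕ, ((n:ℝ)+1) ^ (-1:ℝ)| = A1 at *
    generalize hA2 : |2 + Real.log b| = A2 at *
    generalize hA4 : |b * max ((0:ℝ) ^ (-1:ℝ)) (b ^ (-1:ℝ))| = A4' at *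
    generalize hA5 : |b ^ ((-1:ℝ)+1)| = A5' at *
    generalize hA6 : |2 ^ (-(-1:ℝ)) * (b ^ ((-1:ℝ)+1) / ((-1:ℝ)+1))| = A6' at *
    linarith only [hbd, h2, h3, h4, h5, h6]
  · -- a > 0 or (a = 0 ∧ -1 < γ)
    rintro (hpos | ⟨rfl, hγ⟩)
    · -- a > 0
      have hbound : ∀ n ∈ Finset.range N,
          (a + ((n:ℝ)+1/2) * ((b-a)/N))^γ ≤ max (a^γ) (b^γ) := by
        intro n hn
        have hx1 : a ≤ a + ((n:ℝ)+1/2) * ((b-a)/N) := by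
          have : 0 ≤ ((n:ℝ)+1/2) * ((b-a)/N) := by positivity
          linarith
        have hx2 := hmid n hn
        rcases le_or_gt 0 γ with hγ0 | hγ0
        · exact le_max_of_le_right (Real.rpow_le_rpow (by linarith) hx2 hγ0)
        · exact le_max_of_le_left (Real.rpow_le_rpow_of_nonpos hpos hx1 hγ0.le)
      have hS : ∑ n ∈ Finset.range N, (a + ((n:ℝ)+1/2) * ((b-a)/N))^γ
          ≤ (N:ℝ) * max (a^γ) (b^γ) := by
        have := Finset.sum_le_card_nsmul (Finset.range N) _ _ hbound
        rwa [Finset.card_range, nsmul_eq_mul] at this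
      have hfin : ((b-a)/N) * ∑ n ∈ Finset.range N, (a + ((n:ℝ)+1/2) * ((b-a)/N))^γ
          ≤ (b-a) * max (a^γ) (b^γ) := by
        calc ((b-a)/N) * ∑ n ∈ Finset.range N, (a + ((n:ℝ)+1/2) * ((b-a)/N))^γ
            ≤ ((b-a)/N) * ((N:ℝ) * max (a^γ) (b^γ)) := mul_le_mul_of_nonneg_left hS hh.le
          _ = ((N:ℝ) * ((b-a)/N)) * max (a^γ) (b^γ) := by ring
          _ = (b-a) * max (a^γ) (b^γ) := by rw [hhN]
      have h3 : (b-a) * max (a^γ) (b^γ) ≤ |(b-a) * max (a^γ) (b^γ)| := le_abs_self _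
      have : (0:ℝ) ≤ |2 ^ (-γ) * ∑' n : ℕ, ((n:ℝ)+1) ^ γ| := abs_nonneg _
      have : (0:ℝ) ≤ |2 + Real.log (b-a)| := abs_nonneg _
      have : (0:ℝ) ≤ |(b-a) ^ (γ+1)| := abs_nonneg _
      have : (0:ℝ) ≤ |2 ^ (-γ) * ((b-a) ^ (γ+1) / (γ+1))| := abs_nonneg _
      linarith
    · -- a = 0, -1 < γ
      simp only [zero_add, sub_zero] at *
      have hb : (0:ℝ) < b := by linarith
      rcases le_or_gt 0 γ with hγ0 | hγ0
      · -- 0 ≤ γ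
        have hbound : ∀ n ∈ Finset.range N, (((n:ℝ)+1/2) * (b/N))^γ ≤ b^γ := by
          intro n hn
          exact Real.rpow_le_rpow (by positivity) (by linarith [hmid n hn]) hγ0
        have hS : ∑ n ∈ Finset.range N, (((n:ℝ)+1/2) * (b/N))^γ ≤ (N:ℝ) * b^γ := by
          have := Finset.sum_le_card_nsmul (Finset.range N) _ _ hbound
          rwa [Finset.card_range, nsmul_eq_mul] at this
        have hfin : (b/N) * ∑ n ∈ Finset.range N, (((n:ℝ)+1/2) * (b/N))^γ ≤ b ^ (γ+1) := by
          calc (b/N) * ∑ n ∈ Finset.range N, (((n:ℝ)+1/2) * (b/N))^γ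
              ≤ (b/N) * ((N:ℝ) * b^γ) := mul_le_mul_of_nonneg_left hS hh.le
            _ = ((N:ℝ) * (b/N)) * b^γ := by ring
            _ = b * b^γ := by rw [hhN]
            _ = b ^ (γ+1) := by rw [Real.rpow_add_one hb.ne']; ring
        have h4 : b ^ (γ+1) ≤ |b ^ (γ+1)| := le_abs_self _
        have : (0:ℝ) ≤ |2 ^ (-γ) * ∑' n : ℕ, ((n:ℝ)+1) ^ γ| := abs_nonneg _
        have : (0:ℝ) ≤ |2 + Real.log b| := abs_nonneg _
        have : (0:ℝ) ≤ |b * max ((0:ℝ)^γ) (b^γ)| := abs_nonneg _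
        have : (0:ℝ) ≤ |2 ^ (-γ) * (b ^ (γ+1) / (γ+1))| := abs_nonneg _
        linarith
      · -- -1 < γ < 0
        rw [factor_sum γ (b/N) hh N]
        have hp0 : (0:ℝ) < γ + 1 := by linarith
        have hSig : ∑ n ∈ Finset.range N, ((n:ℝ)+1/2)^γ
            ≤ 2^(-γ) * ((N:ℝ) ^ (γ+1) / (γ+1)) := by
          calc ∑ n ∈ Finset.range N, ((n:ℝ)+1/2)^γ
              ≤ ∑ n ∈ Finset.range N, 2^(-γ) * ((n:ℝ)+1)^γ :=
                Finset.sum_le_sum fun n _ => half_bound hγ0.le n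
            _ = 2^(-γ) * ∑ n ∈ Finset.range N, ((n:ℝ)+1)^γ := by rw [Finset.mul_sum]
            _ ≤ 2^(-γ) * ((N:ℝ) ^ (γ+1) / (γ+1)) :=
                mul_le_mul_of_nonneg_left (sum_rpow_le hγ hγ0 N) (by positivity)
        have hfin : (b/N) ^ (γ+1) * ∑ n ∈ Finset.range N, ((n:ℝ)+1/2)^γ
            ≤ 2 ^ (-γ) * (b ^ (γ+1) / (γ+1)) := by
          have hpp : (0:ℝ) < (b/N) ^ (γ+1) := Real.rpow_pos_of_pos hh (γ+1)
          calc (b/N) ^ (γ+1) * ∑ n ∈ Finset.range N, ((n:ℝ)+1/2)^γ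
              ≤ (b/N) ^ (γ+1) * (2^(-γ) * ((N:ℝ) ^ (γ+1) / (γ+1))) :=
                mul_le_mul_of_nonneg_left hSig hpp.le
            _ = 2^(-γ) * (((b/N) ^ (γ+1) * (N:ℝ) ^ (γ+1)) / (γ+1)) := by ring
            _ = 2 ^ (-γ) * (b ^ (γ+1) / (γ+1)) := by
                rw [← Real.mul_rpow hh.le hN0.le]
                rw [div_mul_cancel₀ _ hN0.ne']
        have h5 : 2 ^ (-γ) * (b ^ (γ+1) / (γ+1)) ≤ |2 ^ (-γ) * (b ^ (γ+1) / (γ+1))| :=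
          le_abs_self _
        have : (0:ℝ) ≤ |2 ^ (-γ) * ∑' n : ℕ, ((n:ℝ)+1) ^ γ| := abs_nonneg _
        have : (0:ℝ) ≤ |2 + Real.log b| := abs_nonneg _
        have : (0:ℝ) ≤ |b * max ((0:ℝ)^γ) (b^γ)| := abs_nonneg _
        have : (0:ℝ) ≤ |b ^ (γ+1)| := abs_nonneg _
        linarith
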